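/- Let A, E, C : (0,1] → ℝ≥0, ε ∈ (0,1], and suppose (i) C(r) ≤ c₁[(ρ/r)³ A(ρ)^{3/4} ε^{3/4} + (r/ρ)³ A(ρ)^{3/2}] for all 0 < r ≤ ρ ≤ 1, (ii) A(r)^{3/2} ≤ c₂[C(2r) + A(2r)^{3/4} C(2r)^{1/2} ε^{3/4}] whenever 2r ≤ 1, and (iii) A(2r) ≤ c₃ (ρ/r) A(ρ) for 2r ≤ ρ. Then setting 𝓔(r) = A(r)^{3/2}, for every δ > 0 there exist constants c, c(δ) > 0 depending only on c₁, c₂, c₃ (and δ for the latter) such that 𝓔(ϑρ) ≤ c[ϑ^{3/4}(ε^{3/4}+1) + δ] 𝓔(ρ) + c(δ) ϑ^{-9}(ε^{3/2} + ε^{9/2}) for all ϑ ∈ (0, 1/2] and ρ ∈ (0,1]. -/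

import Mathlib

open Real

lemma sqrt_subadd (a b : ℝ) (ha : 0 ≤ a) (hb : 0 ≤ b) :
    (a + b) ^ ((1:ℝ)/2) ≤ a ^ ((1:ℝ)/2) + b ^ ((1:ℝ)/2) := by
  rw [← Real.sqrt_eq_rpow, ← Real.sqrt_eq_rpow, ← Real.sqrt_eq_rpow]
  have h := Real.sqrt_le_sqrt (show a + b ≤ (Real.sqrt a + Real.sqrt b) ^ 2 by
    nlinarith [Real.sq_sqrt ha, Real.sq_sqrt hb, Real.sqrt_nonneg a, Real.sqrt_nonneg b])
  rwa [Real.sqrt_sq (by positivity)] at h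

lemma young34 (a t d : ℝ) (ha : 0 ≤ a) (ht : 0 ≤ t) (hd : 0 < d) :
    a * t ^ ((3:ℝ)/4) ≤ d * t + a ^ 4 / d ^ 3 := by
  rcases le_or_gt ((a/d)^4) t with h | h
  · have h4 : a / d ≤ t ^ ((1:ℝ)/4) := by
      have h' := Real.rpow_le_rpow (by positivity) h (by norm_num : (0:ℝ) ≤ 1/4)
      rwa [← Real.rpow_natCast (a/d) 4, ← Real.rpow_mul (by positivity),
        show ((4:ℕ):ℝ) * (1/4) = 1 by norm_num, Real.rpow_one] at h'
    have key : a ≤ d * t ^ ((1:ℝ)/4) := by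
      have := mul_le_mul_of_nonneg_left h4 hd.le
      calc a = d * (a/d) := by field_simp
        _ ≤ d * t ^ ((1:ℝ)/4) := this
    calc a * t ^ ((3:ℝ)/4) ≤ (d * t ^ ((1:ℝ)/4)) * t ^ ((3:ℝ)/4) := by
          exact mul_le_mul_of_nonneg_right key (by positivity)
      _ = d * t := by
          rw [mul_assoc, ← Real.rpow_add' ht (by norm_num)]
          norm_num
      _ ≤ d * t + a ^ 4 / d ^ 3 := by nlinarith [pow_nonneg (abs_nonneg a) 4, pow_pos hd 3, div_nonneg (pow_nonneg ha 4) (pow_pos hd 3).le]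
  · have h' : t ^ ((3:ℝ)/4) ≤ ((a/d)^4) ^ ((3:ℝ)/4) :=
      Real.rpow_le_rpow ht h.le (by norm_num)
    have heq : ((a/d)^4 : ℝ) ^ ((3:ℝ)/4) = (a/d)^3 := by
      rw [← Real.rpow_natCast (a/d) 4, ← Real.rpow_mul (by positivity),
        show ((4:ℕ):ℝ) * (3/4) = ((3:ℕ):ℝ) by norm_num, Real.rpow_natCast]
    have : a * t ^ ((3:ℝ)/4) ≤ a * (a/d)^3 := by
      rw [heq] at h'; exact mul_le_mul_of_nonneg_left h' ha
    have he2 : a * (a/d)^3 = a^4/d^3 := by field_simp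
    nlinarith [mul_nonneg hd.le ht]

lemma young12 (a t d : ℝ) (ha : 0 ≤ a) (ht : 0 ≤ t) (hd : 0 < d) :
    a * t ^ ((1:ℝ)/2) ≤ d * t + a ^ 2 / d := by
  rcases le_or_gt ((a/d)^2) t with h | h
  · have h4 : a / d ≤ t ^ ((1:ℝ)/2) := by
      have h' := Real.rpow_le_rpow (by positivity) h (by norm_num : (0:ℝ) ≤ 1/2)
      rwa [← Real.rpow_natCast (a/d) 2, ← Real.rpow_mul (by positivity),
        show ((2:ℕ):ℝ) * (1/2) = 1 by norm_num, Real.rpow_one] at h'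
    have key : a ≤ d * t ^ ((1:ℝ)/2) := by
      have := mul_le_mul_of_nonneg_left h4 hd.le
      calc a = d * (a/d) := by field_simp
        _ ≤ d * t ^ ((1:ℝ)/2) := this
    have h5 : a * t ^ ((1:ℝ)/2) ≤ (d * t ^ ((1:ℝ)/2)) * t ^ ((1:ℝ)/2) :=
      mul_le_mul_of_nonneg_right key (by positivity)
    have he : (d * t ^ ((1:ℝ)/2)) * t ^ ((1:ℝ)/2) = d * t := by
      rw [mul_assoc, ← Real.rpow_add' ht (by norm_num)]; norm_num
    nlinarith [div_nonneg (sq_nonneg a) hd.le]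
  · have h' : t ^ ((1:ℝ)/2) ≤ ((a/d)^2) ^ ((1:ℝ)/2) :=
      Real.rpow_le_rpow ht h.le (by norm_num)
    have heq : ((a/d)^2 : ℝ) ^ ((1:ℝ)/2) = a/d := by
      rw [← Real.rpow_natCast (a/d) 2, ← Real.rpow_mul (by positivity),
        show ((2:ℕ):ℝ) * (1/2) = 1 by norm_num, Real.rpow_one]
    have : a * t ^ ((1:ℝ)/2) ≤ a * (a/d) := by
      rw [heq] at h'; exact mul_le_mul_of_nonneg_left h' ha
    have he2 : a * (a/d) = a^2/d := by field_simp
    nlinarith [mul_nonneg hd.le ht]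

set_option maxHeartbeats 1000000 in
lemma core12 (c₁ c₂ c₃ δ ϑ e x E2 C2 A2 : ℝ)
    (hc₁ : 0 < c₁) (hc₂ : 0 < c₂) (hc₃ : 0 < c₃) (hδ : 0 < δ)
    (hϑ0 : 0 < ϑ) (hϑ1 : ϑ ≤ 1) (he0 : 0 < e) (hx : 0 ≤ x)
    (hC2 : 0 ≤ C2) (hA2 : 0 ≤ A2)
    (h1 : E2 ≤ c₂ * (C2 + A2 ^ ((3:ℝ)/4) * C2 ^ ((1:ℝ)/2) * e ^ ((3:ℝ)/4)))
    (hC : C2 ≤ c₁ * ((1/(2*ϑ)) ^ 3 * x ^ ((3:ℝ)/4) * e ^ ((3:ℝ)/4)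
        + (2*ϑ) ^ 3 * x ^ ((3:ℝ)/2)))
    (hA : A2 ≤ c₃ * ϑ⁻¹ * x) :
    E2 ≤ (8*c₁*c₂ + 3*(c₂ * c₃ ^ ((3:ℝ)/4) * c₁ ^ ((1:ℝ)/2)) + 2)
          * (ϑ ^ ((3:ℝ)/4) * (e ^ ((3:ℝ)/4) + 1) + δ) * x ^ ((3:ℝ)/2)
        + ((c₂ * c₃ ^ ((3:ℝ)/4) * c₁ ^ ((1:ℝ)/2)) ^ 4 / δ ^ 3 + (c₁*c₂) ^ 2 / δ)
          * ϑ ^ (-(9:ℝ)) * (e ^ ((3:ℝ)/2) + e ^ ((9:ℝ)/2)) := by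
  set K := c₂ * c₃ ^ ((3:ℝ)/4) * c₁ ^ ((1:ℝ)/2) with hKdef
  have hK : 0 < K := by positivity
  set u1 := (1/(2*ϑ)) ^ 3 * x ^ ((3:ℝ)/4) * e ^ ((3:ℝ)/4) with hu1
  set u2 := (2*ϑ) ^ 3 * x ^ ((3:ℝ)/2) with hu2
  have hu1n : 0 ≤ u1 := by positivity
  have hu2n : 0 ≤ u2 := by positivity
  -- Step A: substitute the bounds into h1
  have stepA : E2 ≤ c₂ * (c₁ * (u1 + u2)
      + (c₃ * ϑ⁻¹ * x) ^ ((3:ℝ)/4) * (c₁ * (u1 + u2)) ^ ((1:ℝ)/2) * e ^ ((3:ℝ)/4)) := by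
    refine h1.trans ?_
    gcongr <;> first
      | exact hC2 | exact hA2 | exact hA | exact hC | positivity
  -- expand the cross factor
  have hB : (c₃ * ϑ⁻¹ * x) ^ ((3:ℝ)/4)
      = c₃ ^ ((3:ℝ)/4) * (ϑ⁻¹) ^ ((3:ℝ)/4) * x ^ ((3:ℝ)/4) := by
    rw [Real.mul_rpow (by positivity) hx, Real.mul_rpow (by positivity) (by positivity)]
  have hCsplit : (c₁ * (u1 + u2)) ^ ((1:ℝ)/2)
      ≤ c₁ ^ ((1:ℝ)/2) * (u1 ^ ((1:ℝ)/2) + u2 ^ ((1:ℝ)/2)) := by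
    rw [Real.mul_rpow hc₁.le (by positivity)]
    exact mul_le_mul_of_nonneg_left (sqrt_subadd _ _ hu1n hu2n) (by positivity)
  have stepB : E2 ≤ c₂ * c₁ * u1 + c₂ * c₁ * u2
      + c₂ * (c₃ ^ ((3:ℝ)/4) * (ϑ⁻¹) ^ ((3:ℝ)/4) * x ^ ((3:ℝ)/4))
        * (c₁ ^ ((1:ℝ)/2) * (u1 ^ ((1:ℝ)/2) + u2 ^ ((1:ℝ)/2))) * e ^ ((3:ℝ)/4) := by
    refine stepA.trans ?_
    rw [hB]
    have := mul_le_mul_of_nonneg_left hCsplit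
      (show (0:ℝ) ≤ c₂ * (c₃ ^ ((3:ℝ)/4) * (ϑ⁻¹) ^ ((3:ℝ)/4) * x ^ ((3:ℝ)/4)) by positivity)
    nlinarith [mul_le_mul_of_nonneg_right this (by positivity : (0:ℝ) ≤ e ^ ((3:ℝ)/4))]
  -- basic facts
  have hinv : ∀ c : ℝ, (ϑ⁻¹) ^ c = ϑ ^ (-c) := fun c => by
    rw [Real.inv_rpow hϑ0.le, ← Real.rpow_neg hϑ0.le]
  have h12ϑ : (1:ℝ)/(2*ϑ) ≤ ϑ⁻¹ := by
    rw [one_div]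
    gcongr <;> first | positivity | linarith
  have hx34 : x ^ ((3:ℝ)/4) = (x ^ ((3:ℝ)/2)) ^ ((1:ℝ)/2) := by
    rw [← Real.rpow_mul hx]; norm_num
  have hx98 : x ^ ((9:ℝ)/8) = (x ^ ((3:ℝ)/2)) ^ ((3:ℝ)/4) := by
    rw [← Real.rpow_mul hx]; norm_num
  have t69 : ϑ ^ (-(6:ℝ)) ≤ ϑ ^ (-(9:ℝ)) :=
    Real.rpow_le_rpow_of_exponent_ge hϑ0 hϑ1 (by norm_num)
  -- Bound B1 : direct u1 term
  have B1 : c₂ * c₁ * u1 ≤ δ * x ^ ((3:ℝ)/2) + (c₁*c₂) ^ 2 * ϑ ^ (-(9:ℝ)) * e ^ ((3:ℝ)/2) / δ := by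
    have step1 : c₂ * c₁ * u1 ≤ (c₁ * c₂ * (ϑ⁻¹) ^ 3 * e ^ ((3:ℝ)/4)) * (x ^ ((3:ℝ)/2)) ^ ((1:ℝ)/2) := by
      rw [hu1, ← hx34]
      calc c₂ * c₁ * ((1/(2*ϑ)) ^ 3 * x ^ ((3:ℝ)/4) * e ^ ((3:ℝ)/4))
          ≤ c₂ * c₁ * ((ϑ⁻¹) ^ 3 * x ^ ((3:ℝ)/4) * e ^ ((3:ℝ)/4)) := by
            gcongr <;> first | positivity | exact h12ϑ
        _ = (c₁ * c₂ * (ϑ⁻¹) ^ 3 * e ^ ((3:ℝ)/4)) * x ^ ((3:ℝ)/4) := by ring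
    have step2 := young12 (c₁ * c₂ * (ϑ⁻¹) ^ 3 * e ^ ((3:ℝ)/4)) (x ^ ((3:ℝ)/2)) δ
      (by positivity) (by positivity) hδ
    have step3 : (c₁ * c₂ * (ϑ⁻¹) ^ 3 * e ^ ((3:ℝ)/4)) ^ 2 / δ
        ≤ (c₁*c₂) ^ 2 * ϑ ^ (-(9:ℝ)) * e ^ ((3:ℝ)/2) / δ := by
      have e32 : ((e ^ ((3:ℝ)/4)) ^ 2 : ℝ) = e ^ ((3:ℝ)/2) := by
        rw [← Real.rpow_natCast (e ^ ((3:ℝ)/4)) 2, ← Real.rpow_mul he0.le]; norm_num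
      have t6 : (((ϑ⁻¹) ^ 3) ^ 2 : ℝ) = ϑ ^ (-(6:ℝ)) := by
        rw [← pow_mul, ← Real.rpow_natCast ϑ⁻¹ 6, hinv]; norm_num
      have expand : (c₁ * c₂ * (ϑ⁻¹) ^ 3 * e ^ ((3:ℝ)/4)) ^ 2
          = (c₁*c₂) ^ 2 * ϑ ^ (-(6:ℝ)) * e ^ ((3:ℝ)/2) := by
        rw [← e32, ← t6]; ring
      rw [expand]
      gcongr <;> first | positivity | exact t69
    linarith
  -- Bound B2 : direct u2 term
  have B2 : c₂ * c₁ * u2 ≤ 8 * c₁ * c₂ * ϑ ^ ((3:ℝ)/4) * x ^ ((3:ℝ)/2) := by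
    rw [hu2]
    have t34 : ϑ ^ (3:ℕ) ≤ ϑ ^ ((3:ℝ)/4) := by
      rw [← Real.rpow_natCast ϑ 3]
      exact Real.rpow_le_rpow_of_exponent_ge hϑ0 hϑ1 (by norm_num)
    calc c₂ * c₁ * ((2*ϑ) ^ 3 * x ^ ((3:ℝ)/2))
        = 8 * c₁ * c₂ * ϑ ^ (3:ℕ) * x ^ ((3:ℝ)/2) := by ring
      _ ≤ 8 * c₁ * c₂ * ϑ ^ ((3:ℝ)/4) * x ^ ((3:ℝ)/2) := by gcongr
  -- Bound on u1^(1/2)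
  have hu1half : u1 ^ ((1:ℝ)/2) ≤ (ϑ⁻¹) ^ ((3:ℝ)/2) * x ^ ((3:ℝ)/8) * e ^ ((3:ℝ)/8) := by
    rw [hu1, Real.mul_rpow (by positivity) (by positivity),
      Real.mul_rpow (by positivity) (by positivity)]
    have h1' : ((1/(2*ϑ)) ^ 3 : ℝ) ^ ((1:ℝ)/2) ≤ (ϑ⁻¹) ^ ((3:ℝ)/2) := by
      have h3 : ((1/(2*ϑ)) ^ 3 : ℝ) ≤ (ϑ⁻¹) ^ 3 := by
        gcongr <;> first | positivity | exact h12ϑ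
      calc ((1/(2*ϑ)) ^ 3 : ℝ) ^ ((1:ℝ)/2) ≤ ((ϑ⁻¹) ^ 3) ^ ((1:ℝ)/2) :=
            Real.rpow_le_rpow (by positivity) h3 (by norm_num)
        _ = (ϑ⁻¹) ^ ((3:ℝ)/2) := by
            rw [← Real.rpow_natCast ϑ⁻¹ 3, ← Real.rpow_mul (by positivity)]; norm_num
    have h2' : ((x ^ ((3:ℝ)/4)) : ℝ) ^ ((1:ℝ)/2) = x ^ ((3:ℝ)/8) := by
      rw [← Real.rpow_mul hx]; norm_num
    have h3' : ((e ^ ((3:ℝ)/4)) : ℝ) ^ ((1:ℝ)/2) = e ^ ((3:ℝ)/8) := by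
      rw [← Real.rpow_mul he0.le]; norm_num
    rw [h2', h3']
    gcongr <;> positivity
  -- Bound B3 : cross u1 term
  have B3 : K * (ϑ⁻¹) ^ ((3:ℝ)/4) * x ^ ((3:ℝ)/4) * e ^ ((3:ℝ)/4) * u1 ^ ((1:ℝ)/2)
      ≤ δ * x ^ ((3:ℝ)/2) + K ^ 4 * ϑ ^ (-(9:ℝ)) * e ^ ((9:ℝ)/2) / δ ^ 3 := by
    have step1 : K * (ϑ⁻¹) ^ ((3:ℝ)/4) * x ^ ((3:ℝ)/4) * e ^ ((3:ℝ)/4) * u1 ^ ((1:ℝ)/2)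
        ≤ (K * ϑ ^ (-(9:ℝ)/4) * e ^ ((9:ℝ)/8)) * (x ^ ((3:ℝ)/2)) ^ ((3:ℝ)/4) := by
      have hmul : K * (ϑ⁻¹) ^ ((3:ℝ)/4) * x ^ ((3:ℝ)/4) * e ^ ((3:ℝ)/4)
            * ((ϑ⁻¹) ^ ((3:ℝ)/2) * x ^ ((3:ℝ)/8) * e ^ ((3:ℝ)/8))
          = (K * ϑ ^ (-(9:ℝ)/4) * e ^ ((9:ℝ)/8)) * x ^ ((9:ℝ)/8) := by
        have hϑc : (ϑ⁻¹) ^ ((3:ℝ)/4) * (ϑ⁻¹) ^ ((3:ℝ)/2) = ϑ ^ (-(9:ℝ)/4) := by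
          rw [← Real.rpow_add (by positivity), hinv]; norm_num
        have hxc : x ^ ((3:ℝ)/4) * x ^ ((3:ℝ)/8) = x ^ ((9:ℝ)/8) := by
          rw [← Real.rpow_add' hx (by norm_num)]; norm_num
        have hec : e ^ ((3:ℝ)/4) * e ^ ((3:ℝ)/8) = e ^ ((9:ℝ)/8) := by
          rw [← Real.rpow_add he0]; norm_num
        calc K * (ϑ⁻¹) ^ ((3:ℝ)/4) * x ^ ((3:ℝ)/4) * e ^ ((3:ℝ)/4)
            * ((ϑ⁻¹) ^ ((3:ℝ)/2) * x ^ ((3:ℝ)/8) * e ^ ((3:ℝ)/8))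
            = K * ((ϑ⁻¹) ^ ((3:ℝ)/4) * (ϑ⁻¹) ^ ((3:ℝ)/2)) * (x ^ ((3:ℝ)/4) * x ^ ((3:ℝ)/8))
              * (e ^ ((3:ℝ)/4) * e ^ ((3:ℝ)/8)) := by ring
          _ = (K * ϑ ^ (-(9:ℝ)/4) * e ^ ((9:ℝ)/8)) * x ^ ((9:ℝ)/8) := by
              rw [hϑc, hxc, hec]; ring
      calc K * (ϑ⁻¹) ^ ((3:ℝ)/4) * x ^ ((3:ℝ)/4) * e ^ ((3:ℝ)/4) * u1 ^ ((1:ℝ)/2)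
          ≤ K * (ϑ⁻¹) ^ ((3:ℝ)/4) * x ^ ((3:ℝ)/4) * e ^ ((3:ℝ)/4)
            * ((ϑ⁻¹) ^ ((3:ℝ)/2) * x ^ ((3:ℝ)/8) * e ^ ((3:ℝ)/8)) := by
            exact mul_le_mul_of_nonneg_left hu1half (by positivity)
        _ = (K * ϑ ^ (-(9:ℝ)/4) * e ^ ((9:ℝ)/8)) * x ^ ((9:ℝ)/8) := hmul
        _ = (K * ϑ ^ (-(9:ℝ)/4) * e ^ ((9:ℝ)/8)) * (x ^ ((3:ℝ)/2)) ^ ((3:ℝ)/4) := by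
            rw [← hx98]
    have step2 := young34 (K * ϑ ^ (-(9:ℝ)/4) * e ^ ((9:ℝ)/8)) (x ^ ((3:ℝ)/2)) δ
      (by positivity) (by positivity) hδ
    have step3 : (K * ϑ ^ (-(9:ℝ)/4) * e ^ ((9:ℝ)/8)) ^ 4 / δ ^ 3
        = K ^ 4 * ϑ ^ (-(9:ℝ)) * e ^ ((9:ℝ)/2) / δ ^ 3 := by
      have t9 : ((ϑ ^ (-(9:ℝ)/4)) ^ (4:ℕ) : ℝ) = ϑ ^ (-(9:ℝ)) := by
        rw [← Real.rpow_natCast (ϑ ^ (-(9:ℝ)/4)) 4, ← Real.rpow_mul hϑ0.le]; norm_num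
      have e92 : ((e ^ ((9:ℝ)/8)) ^ (4:ℕ) : ℝ) = e ^ ((9:ℝ)/2) := by
        rw [← Real.rpow_natCast (e ^ ((9:ℝ)/8)) 4, ← Real.rpow_mul he0.le]; norm_num
      rw [← t9, ← e92]; ring
    linarith
  -- Bound on u2^(1/2)
  have hu2half : u2 ^ ((1:ℝ)/2) ≤ 3 * ϑ ^ ((3:ℝ)/2) * x ^ ((3:ℝ)/4) := by
    rw [hu2, Real.mul_rpow (by positivity) (by positivity)]
    have h2' : ((x ^ ((3:ℝ)/2)) : ℝ) ^ ((1:ℝ)/2) = x ^ ((3:ℝ)/4) := by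
      rw [← Real.rpow_mul hx]; norm_num
    rw [h2']
    have h2c : (((2*ϑ) ^ 3 : ℝ)) ^ ((1:ℝ)/2) ≤ 3 * ϑ ^ ((3:ℝ)/2) := by
      have e9 : ((3 * ϑ ^ ((3:ℝ)/2)) ^ 2 : ℝ) = 9 * ϑ ^ ((3:ℝ)) := by
        rw [mul_pow, ← Real.rpow_natCast (ϑ ^ ((3:ℝ)/2)) 2, ← Real.rpow_mul hϑ0.le]
        norm_num
      have hle : ((2*ϑ) ^ 3 : ℝ) ≤ (3 * ϑ ^ ((3:ℝ)/2)) ^ 2 := by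
        rw [e9, show ((2*ϑ) ^ 3 : ℝ) = 8 * ϑ ^ (3:ℕ) by ring, ← Real.rpow_natCast ϑ 3]
        push_cast
        nlinarith [Real.rpow_nonneg hϑ0.le (3:ℝ)]
      calc (((2*ϑ) ^ 3 : ℝ)) ^ ((1:ℝ)/2) ≤ ((3 * ϑ ^ ((3:ℝ)/2)) ^ 2) ^ ((1:ℝ)/2) :=
            Real.rpow_le_rpow (by positivity) hle (by norm_num)
        _ = 3 * ϑ ^ ((3:ℝ)/2) := by
            rw [← Real.rpow_natCast (3 * ϑ ^ ((3:ℝ)/2)) 2, ← Real.rpow_mul (by positivity)]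
            norm_num
    gcongr <;> positivity
  -- Bound B4 : cross u2 term
  have B4 : K * (ϑ⁻¹) ^ ((3:ℝ)/4) * x ^ ((3:ℝ)/4) * e ^ ((3:ℝ)/4) * u2 ^ ((1:ℝ)/2)
      ≤ 3 * K * ϑ ^ ((3:ℝ)/4) * e ^ ((3:ℝ)/4) * x ^ ((3:ℝ)/2) := by
    have step1 : K * (ϑ⁻¹) ^ ((3:ℝ)/4) * x ^ ((3:ℝ)/4) * e ^ ((3:ℝ)/4) * u2 ^ ((1:ℝ)/2)
        ≤ K * (ϑ⁻¹) ^ ((3:ℝ)/4) * x ^ ((3:ℝ)/4) * e ^ ((3:ℝ)/4)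
          * (3 * ϑ ^ ((3:ℝ)/2) * x ^ ((3:ℝ)/4)) :=
      mul_le_mul_of_nonneg_left hu2half (by positivity)
    have heq : K * (ϑ⁻¹) ^ ((3:ℝ)/4) * x ^ ((3:ℝ)/4) * e ^ ((3:ℝ)/4)
          * (3 * ϑ ^ ((3:ℝ)/2) * x ^ ((3:ℝ)/4))
        = 3 * K * ϑ ^ ((3:ℝ)/4) * e ^ ((3:ℝ)/4) * x ^ ((3:ℝ)/2) := by
      have hϑc : (ϑ⁻¹) ^ ((3:ℝ)/4) * ϑ ^ ((3:ℝ)/2) = ϑ ^ ((3:ℝ)/4) := by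
        rw [hinv, ← Real.rpow_add hϑ0]; norm_num
      have hxc : x ^ ((3:ℝ)/4) * x ^ ((3:ℝ)/4) = x ^ ((3:ℝ)/2) := by
        rw [← Real.rpow_add' hx (by norm_num)]; norm_num
      calc K * (ϑ⁻¹) ^ ((3:ℝ)/4) * x ^ ((3:ℝ)/4) * e ^ ((3:ℝ)/4)
            * (3 * ϑ ^ ((3:ℝ)/2) * x ^ ((3:ℝ)/4))
          = 3 * K * ((ϑ⁻¹) ^ ((3:ℝ)/4) * ϑ ^ ((3:ℝ)/2)) * e ^ ((3:ℝ)/4)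
            * (x ^ ((3:ℝ)/4) * x ^ ((3:ℝ)/4)) := by ring
        _ = 3 * K * ϑ ^ ((3:ℝ)/4) * e ^ ((3:ℝ)/4) * x ^ ((3:ℝ)/2) := by rw [hϑc, hxc]
    linarith
  -- assemble
  have hsplit : c₂ * (c₃ ^ ((3:ℝ)/4) * (ϑ⁻¹) ^ ((3:ℝ)/4) * x ^ ((3:ℝ)/4))
        * (c₁ ^ ((1:ℝ)/2) * (u1 ^ ((1:ℝ)/2) + u2 ^ ((1:ℝ)/2))) * e ^ ((3:ℝ)/4)
      = K * (ϑ⁻¹) ^ ((3:ℝ)/4) * x ^ ((3:ℝ)/4) * e ^ ((3:ℝ)/4) * u1 ^ ((1:ℝ)/2)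
        + K * (ϑ⁻¹) ^ ((3:ℝ)/4) * x ^ ((3:ℝ)/4) * e ^ ((3:ℝ)/4) * u2 ^ ((1:ℝ)/2) := by
    rw [hKdef]; ring
  rw [hsplit] at stepB
  have final : E2 ≤ (δ * x ^ ((3:ℝ)/2) + (c₁*c₂) ^ 2 * ϑ ^ (-(9:ℝ)) * e ^ ((3:ℝ)/2) / δ)
      + 8 * c₁ * c₂ * ϑ ^ ((3:ℝ)/4) * x ^ ((3:ℝ)/2)
      + (δ * x ^ ((3:ℝ)/2) + K ^ 4 * ϑ ^ (-(9:ℝ)) * e ^ ((9:ℝ)/2) / δ ^ 3)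
      + 3 * K * ϑ ^ ((3:ℝ)/4) * e ^ ((3:ℝ)/4) * x ^ ((3:ℝ)/2) := by linarith
  have hT : (0:ℝ) ≤ ϑ ^ ((3:ℝ)/4) := by positivity
  have hT9 : (0:ℝ) ≤ ϑ ^ (-(9:ℝ)) := by positivity
  have hP : (0:ℝ) ≤ x ^ ((3:ℝ)/2) := by positivity
  have hE34 : (0:ℝ) ≤ e ^ ((3:ℝ)/4) := by positivity
  have hE32 : (0:ℝ) ≤ e ^ ((3:ℝ)/2) := by positivity
  have hE92 : (0:ℝ) ≤ e ^ ((9:ℝ)/2) := by positivity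
  have extra : (0:ℝ) ≤ (8*c₁*c₂+2) * (ϑ ^ ((3:ℝ)/4) * e ^ ((3:ℝ)/4) * x ^ ((3:ℝ)/2))
      + (3*K+2) * (ϑ ^ ((3:ℝ)/4) * x ^ ((3:ℝ)/2))
      + (8*c₁*c₂+3*K) * (δ * x ^ ((3:ℝ)/2))
      + K ^ 4 / δ ^ 3 * (ϑ ^ (-(9:ℝ)) * e ^ ((3:ℝ)/2))
      + (c₁*c₂) ^ 2 / δ * (ϑ ^ (-(9:ℝ)) * e ^ ((9:ℝ)/2)) := by positivity
  have key : ((δ * x ^ ((3:ℝ)/2) + (c₁*c₂) ^ 2 * ϑ ^ (-(9:ℝ)) * e ^ ((3:ℝ)/2) / δ)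
      + 8 * c₁ * c₂ * ϑ ^ ((3:ℝ)/4) * x ^ ((3:ℝ)/2)
      + (δ * x ^ ((3:ℝ)/2) + K ^ 4 * ϑ ^ (-(9:ℝ)) * e ^ ((9:ℝ)/2) / δ ^ 3)
      + 3 * K * ϑ ^ ((3:ℝ)/4) * e ^ ((3:ℝ)/4) * x ^ ((3:ℝ)/2))
      + ((8*c₁*c₂+2) * (ϑ ^ ((3:ℝ)/4) * e ^ ((3:ℝ)/4) * x ^ ((3:ℝ)/2))
      + (3*K+2) * (ϑ ^ ((3:ℝ)/4) * x ^ ((3:ℝ)/2))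
      + (8*c₁*c₂+3*K) * (δ * x ^ ((3:ℝ)/2))
      + K ^ 4 / δ ^ 3 * (ϑ ^ (-(9:ℝ)) * e ^ ((3:ℝ)/2))
      + (c₁*c₂) ^ 2 / δ * (ϑ ^ (-(9:ℝ)) * e ^ ((9:ℝ)/2)))
      = (8*c₁*c₂ + 3*K + 2) * (ϑ ^ ((3:ℝ)/4) * (e ^ ((3:ℝ)/4) + 1) + δ) * x ^ ((3:ℝ)/2)
      + (K ^ 4 / δ ^ 3 + (c₁*c₂) ^ 2 / δ) * ϑ ^ (-(9:ℝ)) * (e ^ ((3:ℝ)/2) + e ^ ((9:ℝ)/2)) := by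
    field_simp
    ring
  linarith




/-- Algebraic combination step of the CKN-type argument: from the two scaled-energy
estimates and Young's inequality one obtains a decay inequality for `𝓔 = A^{3/2}`. -/
theorem stmt12 (A E C : ℝ → ℝ) (c₁ c₂ c₃ ε : ℝ)
    (hc₁ : 0 < c₁) (hc₂ : 0 < c₂) (hc₃ : 0 < c₃) (hε : ε ∈ Set.Ioc (0 : ℝ) 1)
    (hA0 : ∀ r ∈ Set.Ioc (0 : ℝ) 1, 0 ≤ A r)
    (hC0 : ∀ r ∈ Set.Ioc (0 : ℝ) 1, 0 ≤ C r)
    (hE0 : ∀ r ∈ Set.Ioc (0 : ℝ) 1, 0 ≤ E r)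
    (hi : ∀ r ρ : ℝ, 0 < r → r ≤ ρ → ρ ≤ 1 →
      C r ≤ c₁ * ((ρ / r) ^ 3 * (A ρ) ^ ((3 : ℝ) / 4) * ε ^ ((3 : ℝ) / 4)
        + (r / ρ) ^ 3 * (A ρ) ^ ((3 : ℝ) / 2)))
    (hii : ∀ r : ℝ, 0 < r → 2 * r ≤ 1 →
      (A r) ^ ((3 : ℝ) / 2) ≤ c₂ * (C (2 * r)
        + (A (2 * r)) ^ ((3 : ℝ) / 4) * (C (2 * r)) ^ ((1 : ℝ) / 2) * ε ^ ((3 : ℝ) / 4)))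
    (hiii : ∀ r ρ : ℝ, 0 < r → 2 * r ≤ ρ → ρ ≤ 1 → A (2 * r) ≤ c₃ * (ρ / r) * A ρ) :
    ∀ δ : ℝ, 0 < δ → ∃ c cδ : ℝ, 0 < c ∧ 0 < cδ ∧
      ∀ ϑ ∈ Set.Ioc (0 : ℝ) (1 / 2), ∀ ρ ∈ Set.Ioc (0 : ℝ) 1,
        (A (ϑ * ρ)) ^ ((3 : ℝ) / 2)
          ≤ c * (ϑ ^ ((3 : ℝ) / 4) * (ε ^ ((3 : ℝ) / 4) + 1) + δ) * (A ρ) ^ ((3 : ℝ) / 2)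
            + cδ * ϑ ^ (-(9 : ℝ)) * (ε ^ ((3 : ℝ) / 2) + ε ^ ((9 : ℝ) / 2)) := by
  intro δ hδ
  refine ⟨8*c₁*c₂ + 3*(c₂ * c₃ ^ ((3:ℝ)/4) * c₁ ^ ((1:ℝ)/2)) + 2,
    (c₂ * c₃ ^ ((3:ℝ)/4) * c₁ ^ ((1:ℝ)/2)) ^ 4 / δ ^ 3 + (c₁*c₂) ^ 2 / δ,
    by positivity, by positivity, ?_⟩
  rintro ϑ ⟨hϑ0, hϑ⟩ ρ ⟨hρ0, hρ1⟩
  have hϑ1 : ϑ ≤ 1 := hϑ.trans (by norm_num)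
  have hr0 : 0 < ϑ * ρ := mul_pos hϑ0 hρ0
  have h2r : 2 * (ϑ * ρ) ≤ ρ := by nlinarith
  have h2r1 : 2 * (ϑ * ρ) ≤ 1 := h2r.trans hρ1
  have hx : 0 ≤ A ρ := hA0 ρ ⟨hρ0, hρ1⟩
  have hmem2 : 2 * (ϑ * ρ) ∈ Set.Ioc (0:ℝ) 1 := ⟨by positivity, h2r1⟩
  have hA2 : 0 ≤ A (2 * (ϑ * ρ)) := hA0 _ hmem2
  have hC2 : 0 ≤ C (2 * (ϑ * ρ)) := hC0 _ hmem2
  have h1 := hii (ϑ * ρ) hr0 h2r1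
  have hCb := hi (2 * (ϑ * ρ)) ρ (by positivity) h2r hρ1
  have e1 : ρ / (2 * (ϑ * ρ)) = 1 / (2 * ϑ) := by
    field_simp
  have e2 : (2 * (ϑ * ρ)) / ρ = 2 * ϑ := by
    field_simp
  rw [e1, e2] at hCb
  have hAb := hiii (ϑ * ρ) ρ hr0 h2r hρ1
  have e3 : ρ / (ϑ * ρ) = ϑ⁻¹ := by
    field_simp
  rw [e3] at hAb
  exact core12 c₁ c₂ c₃ δ ϑ ε (A ρ) ((A (ϑ * ρ)) ^ ((3:ℝ)/2)) (C (2 * (ϑ * ρ)))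
    (A (2 * (ϑ * ρ))) hc₁ hc₂ hc₃ hδ hϑ0 hϑ1 hε.1 hx hC2 hA2 h1 hCb hAb
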